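/- Let y1, y2 be distinct points in R^d and let Y be a finite set of points such that conv(Y) ∩ conv({y1,y2}) ≠ ∅ (Y is an obstacle between y1 and y2). If Y is nontrivial (y1 ∉ conv(Y) and y2 ∉ conv(Y)) and the segment conv({y1,y2}) is contained in the affine hull aff(Y), then Y is not minimal: there exists y ∈ Y with conv(Y \ {y}) ∩ conv({y1,y2}) ≠ ∅. -/

import Mathlib

open Finset

private lemma exists_affine_comb {d : ℕ} (Y : Finset (Fin d → ℝ)) (p : Fin d → ℝ)
    (hp : p ∈ affineSpan ℝ (Y : Set (Fin d → ℝ))) :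
    ∃ a : (Fin d → ℝ) → ℝ, ∑ i ∈ Y, a i = 1 ∧ ∑ i ∈ Y, a i • i = p := by
  classical
  have hrange : (Y : Set (Fin d → ℝ)) = Set.range ((↑) : {x // x ∈ Y} → (Fin d → ℝ)) := by
    simp [Subtype.range_coe]
  rw [hrange] at hp
  obtain ⟨w, hw1, hwp⟩ := eq_affineCombination_of_mem_affineSpan_of_fintype hp
  refine ⟨fun x => if h : x ∈ Y then w ⟨x, h⟩ else 0, ?_, ?_⟩
  · rw [← Finset.sum_attach Y]
    rw [Finset.attach_eq_univ]
    rw [← hw1]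
    exact Finset.sum_congr rfl fun i _ => dif_pos i.2
  · rw [← Finset.sum_attach Y (fun i => (if h : i ∈ Y then w ⟨i, h⟩ else 0) • i)]
    rw [Finset.attach_eq_univ]
    rw [hwp, Finset.univ.affineCombination_eq_linear_combination _ _ hw1]
    exact Finset.sum_congr rfl fun i _ => by rw [dif_pos i.2]

/-- A nontrivial obstacle whose affine hull contains the whole segment is not
minimal. -/
theorem stmt_5 (d : ℕ) (y1 y2 : Fin d → ℝ) (hne : y1 ≠ y2) (Y : Finset (Fin d → ℝ))
    (hobs : (convexHull ℝ (Y : Set (Fin d → ℝ)) ∩ convexHull ℝ ({y1, y2} : Set (Fin d → ℝ))).Nonempty)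
    (h1 : y1 ∉ convexHull ℝ (Y : Set (Fin d → ℝ)))
    (h2 : y2 ∉ convexHull ℝ (Y : Set (Fin d → ℝ)))
    (haff : convexHull ℝ ({y1, y2} : Set (Fin d → ℝ)) ⊆ (affineSpan ℝ (Y : Set (Fin d → ℝ)) : Set (Fin d → ℝ))) :
    ∃ y ∈ Y,
      (convexHull ℝ ((Y.erase y : Finset (Fin d → ℝ)) : Set (Fin d → ℝ)) ∩
        convexHull ℝ ({y1, y2} : Set (Fin d → ℝ))).Nonempty := by
  classical
  by_contra hcon
  push_neg at hcon
  -- set up the path γ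
  set γ : ℝ → (Fin d → ℝ) := fun t => (1 - t) • y1 + t • y2 with hγ
  have hseg : convexHull ℝ ({y1, y2} : Set (Fin d → ℝ)) = γ '' Set.Icc (0:ℝ) 1 := by
    rw [convexHull_pair, segment_eq_image]
  -- the set of parameters where γ meets conv Y
  set T : Set ℝ := Set.Icc (0:ℝ) 1 ∩ γ ⁻¹' (convexHull ℝ (Y : Set (Fin d → ℝ))) with hT
  have hTne : T.Nonempty := by
    obtain ⟨x, hxY, hxs⟩ := hobs
    rw [hseg] at hxs
    obtain ⟨t, ht, rfl⟩ := hxs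
    exact ⟨t, ht, hxY⟩
  have hγcont : Continuous γ := by
    apply Continuous.add
    · exact (continuous_const.sub continuous_id).smul continuous_const
    · exact continuous_id.smul continuous_const
  have hTclosed : IsClosed T :=
    isClosed_Icc.inter ((Y.finite_toSet.isClosed_convexHull (𝕜 := ℝ)).preimage hγcont)
  have hTbdd : BddBelow T := ⟨0, fun t ht => ht.1.1⟩
  set t0 : ℝ := sInf T with ht0def
  have ht0T : t0 ∈ T := hTclosed.csInf_mem hTne hTbdd
  have ht0pos : 0 < t0 := by
    rcases lt_or_eq_of_le ht0T.1.1 with h | h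
    · exact h
    · exfalso; apply h1
      have : γ t0 ∈ convexHull ℝ (Y : Set (Fin d → ℝ)) := ht0T.2
      rw [← h] at this
      simpa [hγ] using this
  -- weights for x = γ t0
  have hxY : γ t0 ∈ convexHull ℝ (Y : Set (Fin d → ℝ)) := ht0T.2
  obtain ⟨w, hw0, hw1, hwx⟩ := Finset.mem_convexHull'.mp hxY
  -- all weights are positive, else some vertex can be erased
  have hwpos : ∀ i ∈ Y, 0 < w i := by
    intro i hi
    rcases lt_or_eq_of_le (hw0 i hi) with h | h
    · exact h
    · exfalso
      have hmem : γ t0 ∈ convexHull ℝ ((Y.erase i : Finset (Fin d → ℝ)) : Set (Fin d → ℝ)) ∩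
          convexHull ℝ ({y1, y2} : Set (Fin d → ℝ)) := by
        refine ⟨?_, ?_⟩
        · rw [Finset.mem_convexHull']
          refine ⟨w, fun y hy => hw0 y (Finset.mem_of_mem_erase hy), ?_, ?_⟩
          · rw [Finset.sum_erase _ (by rw [← h])]; exact hw1
          · rw [Finset.sum_erase _ (by rw [← h]; simp)]; exact hwx
        · rw [hseg]
          exact ⟨t0, ht0T.1, rfl⟩
      rw [hcon i hi] at hmem
      exact hmem
  -- y1 and y2 as affine combinations of Y
  have hy1span : y1 ∈ affineSpan ℝ (Y : Set (Fin d → ℝ)) :=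
    haff (subset_convexHull ℝ _ (by simp))
  have hy2span : y2 ∈ affineSpan ℝ (Y : Set (Fin d → ℝ)) :=
    haff (subset_convexHull ℝ _ (by simp))
  obtain ⟨a, ha1, hay⟩ := exists_affine_comb Y y1 hy1span
  obtain ⟨b, hb1, hby⟩ := exists_affine_comb Y y2 hy2span
  set c : (Fin d → ℝ) → ℝ := fun i => b i - a i with hc
  have hcsum : ∑ i ∈ Y, c i = 0 := by simp [hc, Finset.sum_sub_distrib, ha1, hb1]
  have hcvec : ∑ i ∈ Y, c i • i = y2 - y1 := by
    simp only [hc, sub_smul, Finset.sum_sub_distrib, hay, hby]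
  have hYne : Y.Nonempty := by
    rcases Y.eq_empty_or_nonempty with h | h
    · exfalso; rw [h] at hxY; simp at hxY
    · exact h
  -- choose ε
  set ε : ℝ := min (t0 / 2) (Y.inf' hYne fun i => if 0 < c i then w i / c i else t0 / 2) with hε
  have hεpos : 0 < ε := by
    apply lt_min (by linarith)
    rw [Finset.lt_inf'_iff]
    intro i hi
    split_ifs with h
    · exact div_pos (hwpos i hi) h
    · linarith
  have hεle : ∀ i ∈ Y, 0 < c i → ε ≤ w i / c i := fun i hi h => by
    calc ε ≤ _ := min_le_right _ _
    _ ≤ _ := Finset.inf'_le _ hi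
    _ = w i / c i := if_pos h
  have hεt0 : ε < t0 := lt_of_le_of_lt (min_le_left _ _) (by linarith)
  -- the perturbed point
  have hnew : γ (t0 - ε) ∈ convexHull ℝ (Y : Set (Fin d → ℝ)) := by
    rw [Finset.mem_convexHull']
    refine ⟨fun i => w i - ε * c i, ?_, ?_, ?_⟩
    · intro i hi
      show 0 ≤ w i - ε * c i
      rcases le_or_gt (c i) 0 with h | h
      · nlinarith [hwpos i hi, hεpos]
      · have := hεle i hi h
        rw [le_div_iff₀ h] at this
        linarith
    · simp [Finset.sum_sub_distrib, hw1, ← Finset.mul_sum, hcsum]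
    · have : ∑ i ∈ Y, (w i - ε * c i) • i
          = (∑ i ∈ Y, w i • i) - ε • (∑ i ∈ Y, c i • i) := by
        rw [Finset.smul_sum, ← Finset.sum_sub_distrib]
        congr 1; ext i
        rw [sub_smul, smul_smul]
      rw [this, hwx, hcvec, hγ]
      simp only
      module
  have : t0 - ε ∈ T := by
    refine ⟨⟨by linarith, by linarith [ht0T.1.2]⟩, hnew⟩
  have := csInf_le hTbdd this
  linarith
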